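/- Let L/K be a quadratic Galois extension of fields with char K ≠ 2 and τ the nontrivial element of Gal(L/K); let W_K be a K-vector space, W_L := L ⊗_K W_K, and θ the τ-semilinear involution of W_L with θ(a ⊗ w) = τ(a) ⊗ w. Let W_+, W_- ⊆ W_L be L-subspaces and φ_+ : W_+ → θ(W_-), φ_- : W_- → θ(W_+) L-linear isomorphisms such that φ_-^τ ∘ φ_+ = id_{W_+} + n for some n with n^e = 0, e ≥ 1. Then the maps φ̃_+ := (1/2)(φ_+ + (φ_-^τ)^{-1}) : W_+ → θ(W_-) and φ̃_- := (1/2)(φ_- + (φ_+^τ)^{-1}) : W_- → θ(W_+) are L-linear isomorphisms, and φ̃_-^τ ∘ φ̃_+ = id_{W_+} + ñ for some ñ with ñ^{⌈e/2⌉} = 0. -/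

import Mathlib

open scoped TensorProduct

/-- The `τ`-semilinear involution `θ : L ⊗[K] W_K → L ⊗[K] W_K`,
`a ⊗ w ↦ τ(a) ⊗ w`, induced by a Galois automorphism `τ ∈ Gal(L/K)`. -/
noncomputable def thetaMap (K L : Type*) [Field K] [Field L] [Algebra K L] (τ : L ≃ₐ[K] L)
    (WK : Type*) [AddCommGroup WK] [Module K WK] :
    (L ⊗[K] WK) → (L ⊗[K] WK) :=
  fun x => LinearMap.rTensor WK τ.toLinearMap x

/-- The `τ`-conjugate `φ^τ := θ ∘ φ ∘ θ` of a map `φ : A → B` between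
subspaces, as a map `C → D` (where `θ` maps `C` into `A` and `B` into `D`). -/
def conjFun {L : Type*} [Field L] {WL : Type*} [AddCommGroup WL] [Module L WL]
    (θ : WL → WL) (A B C D : Submodule L WL) (f : ↥A → ↥B)
    (h1 : ∀ x : WL, x ∈ C → θ x ∈ A) (h2 : ∀ x : WL, x ∈ B → θ x ∈ D) :
    ↥C → ↥D :=
  fun x => ⟨θ ((f ⟨θ (x : WL), h1 x x.2⟩ : ↥B) : WL),
    h2 _ (f ⟨θ (x : WL), h1 x x.2⟩).2⟩

/-- One step of unipotent stabilization: it replaces the pair `(φ₊, φ₋)` with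
the pair `(½(φ₊ + (φ₋^τ)⁻¹), ½(φ₋ + (φ₊^τ)⁻¹))`. -/
noncomputable def stabStep {L : Type*} [Field L] {WL : Type*} [AddCommGroup WL]
    [Module L WL] (θ : WL → WL) (Wp Wm Tp Tm : Submodule L WL)
    (h1 : ∀ x : WL, x ∈ Tp → θ x ∈ Wm) (h2 : ∀ x : WL, x ∈ Tm → θ x ∈ Wp)
    (fp : ↥Wp → ↥Tp) (fm : ↥Wm → ↥Tm) : (↥Wp → ↥Tp) × (↥Wm → ↥Tm) :=
  (fun x => (2 : L)⁻¹ • (fp x + Function.invFun (conjFun θ Wm Tm Tp Wp fm h1 h2) x),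
   fun y => (2 : L)⁻¹ • (fm y + Function.invFun (conjFun θ Wp Tp Tm Wm fp h2 h1) y))

section Aux
variable {L : Type*} [Field L] {WL : Type*} [AddCommGroup WL] [Module L WL]

def conjLin (τ : L → L) (θ : WL → WL)
    (hadd : ∀ x y : WL, θ (x + y) = θ x + θ y)
    (hsmul : ∀ (a : L) (x : WL), θ (a • x) = τ a • θ x)
    (hτ : ∀ a : L, τ (τ a) = a)
    (A B C D : Submodule L WL) (f : ↥A →ₗ[L] ↥B)
    (h1 : ∀ x : WL, x ∈ C → θ x ∈ A) (h2 : ∀ x : WL, x ∈ B → θ x ∈ D) :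
    ↥C →ₗ[L] ↥D where
  toFun := conjFun θ A B C D ⇑f h1 h2
  map_add' x y := by
    apply Subtype.ext
    simp only [conjFun, Submodule.coe_add]
    rw [← hadd]
    congr 1
    rw [show (⟨θ ((x:WL) + (y:WL)), h1 _ (Submodule.add_mem _ x.2 y.2)⟩ : ↥A)
        = ⟨θ (x:WL), h1 _ x.2⟩ + ⟨θ (y:WL), h1 _ y.2⟩ from Subtype.ext (hadd _ _)]
    rw [map_add, Submodule.coe_add]
  map_smul' a x := by
    apply Subtype.ext
    simp only [conjFun, SetLike.val_smul, RingHom.id_apply]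
    rw [show (⟨θ ((a:L) • (x:WL)), h1 _ (Submodule.smul_mem _ a x.2)⟩ : ↥A)
        = τ a • ⟨θ (x:WL), h1 _ x.2⟩ from Subtype.ext (hsmul a (x:WL))]
    rw [map_smul, SetLike.val_smul, hsmul, hτ]

@[simp] theorem conjLin_coe (τ : L → L) (θ : WL → WL) (hadd hsmul hτ) (A B C D : Submodule L WL)
    (f : ↥A →ₗ[L] ↥B) (h1 h2) :
    ⇑(conjLin τ θ hadd hsmul hτ A B C D f h1 h2) = conjFun θ A B C D ⇑f h1 h2 := rfl

end Aux

set_option maxHeartbeats 1600000 in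
/-- **Unipotent stabilization, one step.**
Let `L/K` be a quadratic Galois extension with `char K ≠ 2`, `τ` the nontrivial
Galois automorphism, `W_K` a `K`-space, `W_L = L ⊗[K] W_K` with the induced
semilinear involution `θ`. Let `W₊, W₋ ⊆ W_L` be `L`-subspaces with
`T₊ = θ(W₋)`, `T₋ = θ(W₊)`, and let `φ₊ : W₊ → θ(W₋)`, `φ₋ : W₋ → θ(W₊)` be
`L`-linear isomorphisms with `φ₋^τ ∘ φ₊ = id + n`, `n^e = 0`, `e ≥ 1`. Then the
maps `φ̃₊ := ½(φ₊ + (φ₋^τ)⁻¹)` and `φ̃₋ := ½(φ₋ + (φ₊^τ)⁻¹)` are `L`-linear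
isomorphisms and `φ̃₋^τ ∘ φ̃₊ = id + ntil` with `ntil^⌈e/2⌉ = 0`. -/
theorem stmt_4 (K L : Type*) [Field K] [Field L] [Algebra K L] [IsGalois K L]
    (hdeg : Module.finrank K L = 2) (hchar : (2 : K) ≠ 0)
    (τ : L ≃ₐ[K] L) (hτ : τ ≠ 1)
    (WK : Type*) [AddCommGroup WK] [Module K WK]
    (Wp Wm Tp Tm : Submodule L (L ⊗[K] WK))
    (hTp : ∀ x : L ⊗[K] WK, x ∈ Tp ↔ thetaMap K L τ WK x ∈ Wm)
    (hTm : ∀ x : L ⊗[K] WK, x ∈ Tm ↔ thetaMap K L τ WK x ∈ Wp)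
    (φp : ↥Wp →ₗ[L] ↥Tp) (φm : ↥Wm →ₗ[L] ↥Tm)
    (hφp : Function.Bijective φp) (hφm : Function.Bijective φm)
    (n : ↥Wp →ₗ[L] ↥Wp) (e : ℕ) (he : 1 ≤ e) (hne : n ^ e = 0)
    (hcomp : ∀ x : ↥Wp,
      conjFun (thetaMap K L τ WK) Wm Tm Tp Wp (⇑φm)
        (fun x hx => (hTp x).mp hx) (fun x hx => (hTm x).mp hx) (φp x)
      = x + n x) :
    (∃ ψp : ↥Wp ≃ₗ[L] ↥Tp, ∀ x : ↥Wp,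
      ψp x = (stabStep (thetaMap K L τ WK) Wp Wm Tp Tm
        (fun x hx => (hTp x).mp hx) (fun x hx => (hTm x).mp hx) (⇑φp) (⇑φm)).1 x) ∧
    (∃ ψm : ↥Wm ≃ₗ[L] ↥Tm, ∀ y : ↥Wm,
      ψm y = (stabStep (thetaMap K L τ WK) Wp Wm Tp Tm
        (fun x hx => (hTp x).mp hx) (fun x hx => (hTm x).mp hx) (⇑φp) (⇑φm)).2 y) ∧
    (∃ ntil : ↥Wp →ₗ[L] ↥Wp, ntil ^ ((e + 1) / 2) = 0 ∧ ∀ x : ↥Wp,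
      conjFun (thetaMap K L τ WK) Wm Tm Tp Wp
        ((stabStep (thetaMap K L τ WK) Wp Wm Tp Tm
          (fun x hx => (hTp x).mp hx) (fun x hx => (hTm x).mp hx) (⇑φp) (⇑φm)).2)
        (fun x hx => (hTp x).mp hx) (fun x hx => (hTm x).mp hx)
        ((stabStep (thetaMap K L τ WK) Wp Wm Tp Tm
          (fun x hx => (hTp x).mp hx) (fun x hx => (hTm x).mp hx) (⇑φp) (⇑φm)).1 x)
      = x + ntil x) := by
    classical
  -- characteristic and Galois facts
  have h2L : (2 : L) ≠ 0 := by
    intro h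
    apply hchar
    apply (algebraMap K L).injective
    rw [map_ofNat, map_zero, h]
  have h4L : (4 : L) ≠ 0 := by
    intro h
    apply h2L
    have : (4 : L) = 2 * 2 := by norm_num
    rw [this] at h
    rcases mul_eq_zero.mp h with h' | h' <;> exact h'
  haveI : FiniteDimensional K L := Module.finite_of_finrank_pos (by omega)
  have hττ : ∀ a : L, τ (τ a) = a := by
    have hcard : Fintype.card (L ≃ₐ[K] L) = 2 := by
      rw [← Nat.card_eq_fintype_card, IsGalois.card_aut_eq_finrank, hdeg]
    have hsq : τ * τ = 1 := by
      have := pow_card_eq_one (G := L ≃ₐ[K] L) (x := τ)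
      rwa [hcard, pow_two] at this
    intro a
    have := congrArg (fun σ : L ≃ₐ[K] L => σ a) hsq
    simpa using this
  set θ := thetaMap K L τ WK with hθdef
  have hθadd : ∀ x y : L ⊗[K] WK, θ (x + y) = θ x + θ y := by
    intro x y; simp [hθdef, thetaMap]
  have hθ0 : θ 0 = 0 := by simp [hθdef, thetaMap]
  have hθsmul : ∀ (a : L) (x : L ⊗[K] WK), θ (a • x) = τ a • θ x := by
    intro a x
    induction x using TensorProduct.induction_on with
    | zero => simp [hθdef, thetaMap]
    | tmul b w =>
        simp [hθdef, thetaMap, TensorProduct.smul_tmul', smul_eq_mul, map_mul]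
    | add x y hx hy => rw [smul_add, hθadd, hx, hy, hθadd, smul_add]
  have hθθ : ∀ x : L ⊗[K] WK, θ (θ x) = x := by
    intro x
    induction x using TensorProduct.induction_on with
    | zero => simp [hθdef, thetaMap]
    | tmul b w => simp [hθdef, thetaMap, hττ]
    | add x y hx hy => rw [hθadd, hθadd, hx, hy]
  have hτ2inv : τ ((2:L)⁻¹) = (2:L)⁻¹ := by
    rw [map_inv₀, map_ofNat]
  -- membership transfers
  have h1 : ∀ x : L ⊗[K] WK, x ∈ Tp → θ x ∈ Wm := fun x hx => (hTp x).mp hx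
  have h2 : ∀ x : L ⊗[K] WK, x ∈ Tm → θ x ∈ Wp := fun x hx => (hTm x).mp hx
  have h1' : ∀ x : L ⊗[K] WK, x ∈ Wm → θ x ∈ Tp := fun x hx => (hTp _).mpr (by rwa [hθθ])
  have h2' : ∀ x : L ⊗[K] WK, x ∈ Wp → θ x ∈ Tm := fun x hx => (hTm _).mpr (by rwa [hθθ])
  -- plus side endomorphisms
  letI : Ring (Module.End L ↥Wp) := @Module.End.instRing L Wp _ _ _
  set u := (1 : Module.End L ↥Wp) + n with hu_def
  have hu_unit : IsUnit u := by rw [hu_def]; exact IsNilpotent.isUnit_one_add (r := n) ⟨e, hne⟩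
  set uinv := (↑hu_unit.unit⁻¹ : Module.End L ↥Wp) with huinv_def
  have hu_mul : u * uinv = 1 := hu_unit.mul_val_inv
  have hu_mul' : uinv * u = 1 := hu_unit.val_inv_mul
  have hu_apply : ∀ w : ↥Wp, u w = w + n w := by
    intro w; rw [hu_def]; simp [LinearMap.add_apply]
  have huinv_u : ∀ w : ↥Wp, uinv (u w) = w := by
    intro w
    have := congrArg (fun f : Module.End L ↥Wp => f w) hu_mul'
    simpa [Module.End.mul_apply, Module.End.one_apply] using this
  have hu_uinv : ∀ w : ↥Wp, u (uinv w) = w := by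
    intro w
    have := congrArg (fun f : Module.End L ↥Wp => f w) hu_mul
    simpa [Module.End.mul_apply, Module.End.one_apply] using this
  set G := conjLin (⇑τ) θ hθadd hθsmul hττ Wm Tm Tp Wp φm h1 h2 with hGdef
  have hGfun : ⇑G = conjFun θ Wm Tm Tp Wp (⇑φm) h1 h2 := by rw [hGdef, conjLin_coe]
  have hGcomp : ∀ w : ↥Wp, G (φp w) = u w := by
    intro w
    have h := hcomp w
    have h' : G (φp w) = w + n w := by rw [hGdef]; exact h
    rw [h', hu_apply]
  have hGbij : Function.Bijective ⇑G := by
    have hbU : Function.Bijective ⇑u := (Module.End.isUnit_iff u).mp hu_unit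
    have hc : ⇑G ∘ ⇑φp = ⇑u := funext hGcomp
    exact (Function.Bijective.of_comp_iff ⇑G hφp).mp (hc ▸ hbU)
  have hGinv : ∀ w : ↥Wp, Function.invFun ⇑G w = φp (uinv w) := by
    intro w
    have hGw : G (φp (uinv w)) = w := by rw [hGcomp]; exact hu_uinv w
    apply hGbij.injective
    rw [Function.invFun_eq ⟨_, hGw⟩, hGw]
  set S := (2:L)⁻¹ • ((1 : Module.End L ↥Wp) + uinv) with hSdef
  have hS_apply : ∀ w : ↥Wp, S w = (2:L)⁻¹ • (w + uinv w) := by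
    intro w; rw [hSdef]; simp
  have hstab1 : ∀ x : ↥Wp, (stabStep θ Wp Wm Tp Tm h1 h2 ⇑φp ⇑φm).1 x = φp (S x) := by
    intro x
    show (2:L)⁻¹ • (φp x + Function.invFun (conjFun θ Wm Tm Tp Wp ⇑φm h1 h2) x) = φp (S x)
    rw [← hGfun, hGinv, hS_apply, map_smul, map_add]
  have h2End : IsUnit (2 : Module.End L ↥Wp) := by
    have := (isUnit_iff_ne_zero.mpr h2L).map (algebraMap L (Module.End L ↥Wp))
    rwa [map_ofNat] at this
  have hu1_unit : IsUnit (u + 1) := by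
    have h' : u + 1 = n + 2 := by
      rw [hu_def, add_comm (1 : Module.End L ↥Wp) n, add_assoc, one_add_one_eq_two]
    rw [h']
    exact IsNilpotent.isUnit_add_right_of_commute (r := n) ⟨e, hne⟩ h2End (Commute.ofNat_right n 2)
  have hSunit : IsUnit S := by
    have h1u : (1 : Module.End L ↥Wp) + uinv = uinv * (u + 1) := by
      rw [mul_add, hu_mul', mul_one, add_comm]
    rw [hSdef, Algebra.smul_def, h1u]
    exact (((isUnit_iff_ne_zero.mpr (inv_ne_zero h2L)).map (algebraMap L (Module.End L ↥Wp))).mul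
      ((hu_unit.unit⁻¹).isUnit.mul hu1_unit))
  have hSbij : Function.Bijective ⇑S := (Module.End.isUnit_iff S).mp hSunit
  -- minus side endomorphisms
  set M := conjLin (⇑τ) θ hθadd hθsmul hττ Wp Wp Tm Tm n h2 h2' with hMdef
  set H := conjLin (⇑τ) θ hθadd hθsmul hττ Wp Tp Tm Wm φp h2 h1 with hHdef
  have hHfun : ⇑H = conjFun θ Wp Tp Tm Wm (⇑φp) h2 h1 := by rw [hHdef, conjLin_coe]
  have hMH : ∀ y : ↥Tm, φm (H y) = y + M y := by
    intro y
    have hx : θ (y : L ⊗[K] WK) ∈ Wp := h2 _ y.2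
    have hc := hcomp ⟨_, hx⟩
    apply Subtype.ext
    rw [Submodule.coe_add]
    have eM : ((M y : ↥Tm) : L ⊗[K] WK) = θ ((n ⟨_, hx⟩ : ↥Wp) : L ⊗[K] WK) := by
      rw [hMdef]; rfl
    have eH : ((φm (H y) : ↥Tm) : L ⊗[K] WK)
        = ((φm ⟨θ ((φp ⟨_, hx⟩ : ↥Tp) : L ⊗[K] WK), h1 _ (φp ⟨_, hx⟩).2⟩ : ↥Tm) : L ⊗[K] WK) := by
      rw [hHdef]; rfl
    rw [eM, eH]
    have hc' := congrArg (fun z : ↥Wp => θ (z : L ⊗[K] WK)) hc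
    have hc'' : ((φm ⟨θ ((φp ⟨_, hx⟩ : ↥Tp) : L ⊗[K] WK), h1 _ (φp ⟨_, hx⟩).2⟩ : ↥Tm) : L ⊗[K] WK)
        = θ (((⟨_, hx⟩ + n ⟨_, hx⟩ : ↥Wp)) : L ⊗[K] WK) := by
      rw [← hθθ (((φm ⟨θ ((φp ⟨_, hx⟩ : ↥Tp) : L ⊗[K] WK), h1 _ (φp ⟨_, hx⟩).2⟩ : ↥Tm) : L ⊗[K] WK))]
      exact hc'
    rw [hc'', Submodule.coe_add, hθadd]
    congr 1
    exact hθθ _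
  have hMpow : ∀ (k : ℕ) (y : ↥Tm),
      (((M ^ k) y : ↥Tm) : L ⊗[K] WK) = θ (((n ^ k) ⟨θ (y : L ⊗[K] WK), h2 _ y.2⟩ : ↥Wp) : L ⊗[K] WK) := by
    intro k
    induction k with
    | zero =>
        intro y
        rw [pow_zero, pow_zero]
        show (y : L ⊗[K] WK) = θ ((⟨θ (y : L ⊗[K] WK), h2 _ y.2⟩ : ↥Wp) : L ⊗[K] WK)
        exact (hθθ _).symm
    | succ k ih =>
        intro y
        rw [pow_succ, pow_succ]
        show (((M ^ k) (M y) : ↥Tm) : L ⊗[K] WK) = θ (((n ^ k) (n ⟨θ (y : L ⊗[K] WK), h2 _ y.2⟩) : ↥Wp) : L ⊗[K] WK)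
        rw [ih (M y)]
        have harg : (⟨θ ((M y : ↥Tm) : L ⊗[K] WK), h2 _ (M y).2⟩ : ↥Wp)
            = n ⟨θ (y : L ⊗[K] WK), h2 _ y.2⟩ := by
          apply Subtype.ext
          show θ ((M y : ↥Tm) : L ⊗[K] WK) = ((n ⟨θ (y : L ⊗[K] WK), h2 _ y.2⟩ : ↥Wp) : L ⊗[K] WK)
          rw [hMdef]
          exact hθθ _
        exact congrArg (fun w : ↥Wp => θ (((n ^ k) w : ↥Wp) : L ⊗[K] WK)) harg
  have hMe : M ^ e = 0 := by
    apply LinearMap.ext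
    intro y
    apply Subtype.ext
    rw [hMpow e y, hne]
    simp [hθ0]
  letI : Ring (Module.End L ↥Tm) := @Module.End.instRing L Tm _ _ _
  set V := (1 : Module.End L ↥Tm) + M with hV_def
  have hv_unit : IsUnit V := by rw [hV_def]; exact IsNilpotent.isUnit_one_add (r := M) ⟨e, hMe⟩
  set vinv := (↑hv_unit.unit⁻¹ : Module.End L ↥Tm) with hvinv_def
  have hv_mul : V * vinv = 1 := hv_unit.mul_val_inv
  have hv_mul' : vinv * V = 1 := hv_unit.val_inv_mul
  have hV_apply : ∀ z : ↥Tm, V z = z + M z := by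
    intro z; rw [hV_def]; simp
  have hV_vinv : ∀ z : ↥Tm, V (vinv z) = z := by
    intro z
    have := congrArg (fun f : Module.End L ↥Tm => f z) hv_mul
    simpa [Module.End.mul_apply, Module.End.one_apply] using this
  have hφmH : ∀ y : ↥Tm, φm (H y) = V y := by
    intro y; rw [hMH, hV_apply]
  have hHbij : Function.Bijective ⇑H := by
    have hbV : Function.Bijective ⇑V := (Module.End.isUnit_iff V).mp hv_unit
    have hc : ⇑φm ∘ ⇑H = ⇑V := funext hφmH
    exact (Function.Bijective.of_comp_iff' hφm ⇑H).mp (hc ▸ hbV)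
  have hHinv : ∀ y : ↥Wm, Function.invFun ⇑H y = vinv (φm y) := by
    intro y
    have hkey : H (vinv (φm y)) = y := by
      apply hφm.injective
      rw [hφmH, hV_vinv]
    apply hHbij.injective
    rw [Function.invFun_eq ⟨_, hkey⟩, hkey]
  set Sm := (2:L)⁻¹ • ((1 : Module.End L ↥Tm) + vinv) with hSmdef
  have hSm_apply : ∀ z : ↥Tm, Sm z = (2:L)⁻¹ • (z + vinv z) := by
    intro z; rw [hSmdef]; simp
  have hstab2 : ∀ y : ↥Wm, (stabStep θ Wp Wm Tp Tm h1 h2 ⇑φp ⇑φm).2 y = Sm (φm y) := by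
    intro y
    show (2:L)⁻¹ • (φm y + Function.invFun (conjFun θ Wp Tp Tm Wm ⇑φp h2 h1) y) = Sm (φm y)
    rw [← hHfun, hHinv, hSm_apply]
  have h2EndM : IsUnit (2 : Module.End L ↥Tm) := by
    have := (isUnit_iff_ne_zero.mpr h2L).map (algebraMap L (Module.End L ↥Tm))
    rwa [map_ofNat] at this
  have hv1_unit : IsUnit (V + 1) := by
    have h' : V + 1 = M + 2 := by
      rw [hV_def, add_comm (1 : Module.End L ↥Tm) M, add_assoc, one_add_one_eq_two]
    rw [h']
    exact IsNilpotent.isUnit_add_right_of_commute (r := M) ⟨e, hMe⟩ h2EndM (Commute.ofNat_right M 2)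
  have hSmunit : IsUnit Sm := by
    have h1v : (1 : Module.End L ↥Tm) + vinv = vinv * (V + 1) := by
      rw [mul_add, hv_mul', mul_one, add_comm]
    rw [hSmdef, Algebra.smul_def, h1v]
    exact (((isUnit_iff_ne_zero.mpr (inv_ne_zero h2L)).map (algebraMap L (Module.End L ↥Tm))).mul
      ((hv_unit.unit⁻¹).isUnit.mul hv1_unit))
  have hSmbij : Function.Bijective ⇑Sm := (Module.End.isUnit_iff Sm).mp hSmunit
  -- the new nilpotent part
  set ntil := (4:L)⁻¹ • (uinv * (n * n)) with hntil_def
  have hun : uinv * n = (1 : Module.End L ↥Wp) - uinv := by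
    have h' : uinv * (1 + n) = 1 := by rw [← hu_def]; exact hu_mul'
    rw [mul_add, mul_one] at h'
    rw [← h']
    abel
  have hunn : uinv * (n * n) = (n : Module.End L ↥Wp) - 1 + uinv := by
    calc uinv * (n * n) = (uinv * n) * n := by rw [mul_assoc]
      _ = ((1 : Module.End L ↥Wp) - uinv) * n := by rw [hun]
      _ = (n : Module.End L ↥Wp) - uinv * n := by rw [sub_mul (1 : Module.End L ↥Wp) uinv n, one_mul]
      _ = (n : Module.End L ↥Wp) - (1 - uinv) := by rw [hun]
      _ = (n : Module.End L ↥Wp) - 1 + uinv := by abel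
  have hA : (u + 1) * (1 + uinv) = uinv * (n * n) + (4:L) • 1 := by
    have h41 : (4:L) • (1 : Module.End L ↥Wp) = 4 := by
      rw [← Algebra.algebraMap_eq_smul_one, map_ofNat]
    rw [hunn, h41, add_mul, mul_add, mul_add, hu_mul, one_mul, mul_one, one_mul, hu_def]
    have h4e : (4 : Module.End L ↥Wp) = 1 + 1 + 1 + 1 := by norm_num
    rw [h4e]
    abel
  have hinv24 : (2:L)⁻¹ * (2:L)⁻¹ = (4:L)⁻¹ := by
    rw [← mul_inv]; norm_num
  have hendE : (2:L)⁻¹ • (u * S + S) = 1 + ntil := by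
    have hstep : u * S + S = (u + 1) * S := by conv_rhs => rw [add_mul, one_mul]
    rw [hstep, hSdef, mul_smul_comm, smul_smul, hinv24, hA, smul_add, hntil_def,
      smul_smul]
    have h441 : ((4:L)⁻¹ * (4:L)) • (1 : Module.End L ↥Wp) = 1 := by
      rw [inv_mul_cancel₀ h4L, one_smul]
    rw [h441, add_comm]
  have hntil_nil : ntil ^ ((e + 1) / 2) = 0 := by
    have hcn : Commute uinv n := by
      have hc0 : Commute (↑hu_unit.unit : Module.End L ↥Wp) n := by
        rw [IsUnit.unit_spec, hu_def]
        exact (Commute.one_left n).add_left (Commute.refl n)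
      exact hc0.units_inv_left
    have hnn : n * n = n ^ 2 := (sq n).symm
    rw [hntil_def, hnn, smul_pow, Commute.mul_pow (hcn.pow_right 2), ← pow_mul]
    have h2k : e ≤ 2 * ((e + 1) / 2) := by omega
    rw [pow_eq_zero_of_le h2k hne, mul_zero, smul_zero]
  -- the conjugate of vinv
  have hVθ : ∀ z : ↥Tm, θ ((V z : ↥Tm) : L ⊗[K] WK)
      = ((u ⟨θ (z : L ⊗[K] WK), h2 _ z.2⟩ : ↥Wp) : L ⊗[K] WK) := by
    intro z
    rw [hV_apply z, Submodule.coe_add, hθadd, hu_apply, Submodule.coe_add]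
    congr 1
    rw [hMdef]
    exact hθθ _
  have hvinvθ : ∀ z : ↥Tm, θ ((vinv z : ↥Tm) : L ⊗[K] WK)
      = ((uinv ⟨θ (z : L ⊗[K] WK), h2 _ z.2⟩ : ↥Wp) : L ⊗[K] WK) := by
    intro z
    have h0 := hVθ (vinv z)
    rw [hV_vinv] at h0
    have h1s : (⟨θ (z : L ⊗[K] WK), h2 _ z.2⟩ : ↥Wp)
        = u ⟨θ ((vinv z : ↥Tm) : L ⊗[K] WK), h2 _ (vinv z).2⟩ := Subtype.ext h0
    rw [h1s, huinv_u]
  -- the final composite identity with local membership proofs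
  have final : ∀ x : ↥Wp,
      conjFun θ Wm Tm Tp Wp ((stabStep θ Wp Wm Tp Tm h1 h2 ⇑φp ⇑φm).2) h1 h2
        ((stabStep θ Wp Wm Tp Tm h1 h2 ⇑φp ⇑φm).1 x) = x + ntil x := by
    intro x
    rw [hstab1 x]
    apply Subtype.ext
    show θ (((stabStep θ Wp Wm Tp Tm h1 h2 ⇑φp ⇑φm).2
        ⟨θ ((φp (S x) : ↥Tp) : L ⊗[K] WK), h1 _ (φp (S x)).2⟩ : ↥Tm) : L ⊗[K] WK)
      = ((x + ntil x : ↥Wp) : L ⊗[K] WK)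
    rw [hstab2, hSm_apply, Submodule.coe_add]
    rw [SetLike.val_smul, Submodule.coe_add, hθsmul, hτ2inv, hθadd]
    have eA : θ ((φm ⟨θ ((φp (S x) : ↥Tp) : L ⊗[K] WK), h1 _ (φp (S x)).2⟩ : ↥Tm) : L ⊗[K] WK)
        = ((u (S x) : ↥Wp) : L ⊗[K] WK) := by
      have h0 := congrArg Subtype.val (hGcomp (S x))
      rw [hGdef] at h0
      exact h0
    have eB : θ ((vinv (φm ⟨θ ((φp (S x) : ↥Tp) : L ⊗[K] WK), h1 _ (φp (S x)).2⟩) : ↥Tm) : L ⊗[K] WK)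
        = ((S x : ↥Wp) : L ⊗[K] WK) := by
      rw [hvinvθ]
      have h1s : (⟨θ ((φm ⟨θ ((φp (S x) : ↥Tp) : L ⊗[K] WK), h1 _ (φp (S x)).2⟩ : ↥Tm) : L ⊗[K] WK),
          h2 _ (φm _).2⟩ : ↥Wp) = u (S x) := Subtype.ext eA
      rw [h1s, huinv_u]
    rw [eA, eB]
    have hend : (2:L)⁻¹ • (u (S x) + S x) = x + ntil x := by
      have h0 := congrArg (fun f : Module.End L ↥Wp => f x) hendE
      simpa using h0
    calc (2:L)⁻¹ • (((u (S x) : ↥Wp) : L ⊗[K] WK) + ((S x : ↥Wp) : L ⊗[K] WK))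
        = (((2:L)⁻¹ • (u (S x) + S x) : ↥Wp) : L ⊗[K] WK) := by
          rw [SetLike.val_smul, Submodule.coe_add]
      _ = ((x + ntil x : ↥Wp) : L ⊗[K] WK) := by rw [hend]
  refine ⟨⟨LinearEquiv.ofBijective (φp ∘ₗ S) (hφp.comp hSbij), ?_⟩,
    ⟨LinearEquiv.ofBijective (Sm ∘ₗ φm) (hSmbij.comp hφm), ?_⟩,
    ⟨ntil, hntil_nil, ?_⟩⟩
  · intro x
    exact (hstab1 x).symm
  · intro y
    exact (hstab2 y).symm
  · intro x
    exact final x
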